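/- If A, B, C are nonempty compact sets in ℝ, then |A + B + C| + |conv(A)| ≥ |A + B| + |A + C|, where all sums are Minkowski sums, conv denotes convex hull, and |·| is one-dimensional Lebesgue measure. -/

import Mathlib

open MeasureTheory Pointwise

theorem modified_supermodularity_one_dim (A B C : Set ℝ)
    (hA : A.Nonempty) (hB : B.Nonempty) (hC : C.Nonempty)
    (hAc : IsCompact A) (hBc : IsCompact B) (hCc : IsCompact C) :
    volume (A + B + C) + volume (convexHull ℝ A) ≥ volume (A + B) + volume (A + C) := by
  set a₁ := sInf A with ha₁d
  set a₂ := sSup A with ha₂d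
  set b₂ := sSup B with hb₂d
  set c₁ := sInf C with hc₁d
  have ha₁ : a₁ ∈ A := hAc.sInf_mem hA
  have ha₂ : a₂ ∈ A := hAc.sSup_mem hA
  have hb₂ : b₂ ∈ B := hBc.sSup_mem hB
  have hc₁ : c₁ ∈ C := hCc.sInf_mem hC
  set S := A + B + ({c₁} : Set ℝ) with hSdef
  set T := A + ({b₂} : Set ℝ) + C with hTdef
  have hSsub : S ⊆ A + B + C := Set.add_subset_add_left (Set.singleton_subset_iff.2 hc₁)
  have hTsub : T ⊆ A + B + C :=
    Set.add_subset_add_right (Set.add_subset_add_left (Set.singleton_subset_iff.2 hb₂))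
  -- compactness / measurability
  have hScpt : IsCompact S := (hAc.add hBc).add isCompact_singleton
  have hTcpt : IsCompact T := (hAc.add isCompact_singleton).add hCc
  have hSmeas : MeasurableSet S := hScpt.isClosed.measurableSet
  have hTmeas : MeasurableSet T := hTcpt.isClosed.measurableSet
  -- translation invariance
  have hvolS : volume S = volume (A + B) := by
    rw [hSdef, Set.add_singleton, Set.image_add_right, measure_preimage_add_right]
  have hvolT : volume T = volume (A + C) := by
    have : T = (A + C) + ({b₂} : Set ℝ) := by rw [hTdef]; abel
    rw [this, Set.add_singleton, Set.image_add_right, measure_preimage_add_right]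
  -- the intersection is contained in an interval of length a₂ - a₁
  have hinter : S ∩ T ⊆ Set.Icc (a₁ + b₂ + c₁) (a₂ + b₂ + c₁) := by
    rintro x ⟨hxS, hxT⟩
    constructor
    · obtain ⟨y, hy, z, hz, rfl⟩ := hxT
      obtain ⟨a, haa, b, hbb, rfl⟩ := hy
      rw [Set.mem_singleton_iff] at hbb
      subst hbb
      have h1 : a₁ ≤ a := csInf_le hAc.bddBelow haa
      have h2 : c₁ ≤ z := csInf_le hCc.bddBelow hz
      show a₁ + b₂ + c₁ ≤ a + b₂ + z
      linarith
    · obtain ⟨y, hy, z, hz, rfl⟩ := hxS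
      obtain ⟨a, haa, b, hbb, rfl⟩ := hy
      rw [Set.mem_singleton_iff] at hz
      subst hz
      have h1 : a ≤ a₂ := le_csSup hAc.bddAbove haa
      have h2 : b ≤ b₂ := le_csSup hBc.bddAbove hbb
      show a + b + c₁ ≤ a₂ + b₂ + c₁
      linarith
  have hIccA : Set.Icc a₁ a₂ ⊆ convexHull ℝ A := by
    have hle : a₁ ≤ a₂ := csInf_le_csSup hA hAc.bddBelow hAc.bddAbove
    rw [(segment_eq_Icc hle).symm]
    exact (convex_convexHull ℝ A).segment_subset (subset_convexHull ℝ A ha₁) (subset_convexHull ℝ A ha₂)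
  have hvolInter : volume (S ∩ T) ≤ volume (convexHull ℝ A) := by
    calc volume (S ∩ T) ≤ volume (Set.Icc (a₁ + b₂ + c₁) (a₂ + b₂ + c₁)) :=
          measure_mono hinter
      _ = volume (Set.Icc a₁ a₂) := by
          rw [Real.volume_Icc, Real.volume_Icc]; ring_nf
      _ ≤ volume (convexHull ℝ A) := measure_mono hIccA
  calc volume (A + B) + volume (A + C) = volume S + volume T := by rw [hvolS, hvolT]
    _ = volume (S ∪ T) + volume (S ∩ T) := (measure_union_add_inter S hTmeas).symm
    _ ≤ volume (A + B + C) + volume (convexHull ℝ A) :=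
        add_le_add (measure_mono (Set.union_subset hSsub hTsub)) hvolInter
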